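/- Suppose a probability measure Π on [0,1] satisfies the local margin condition Π(|Q − 1/2| ≤ t) ≤ C t^κ for all 0 < t < t₀, with constants C, κ > 0 and t₀ ∈ (0,1/2]. Then for M = 2n+1, |V_n(Π) − V_∞(Π)| ≤ exp(−2M t₀²) + C Γ(1 + κ/2) (2M)^{−κ/2}. -/

import Mathlib

open MeasureTheory

/-- Odd-budget majority accuracy: `P n q = ℙ(Bin(2n+1,q) ≥ n+1)`. -/
noncomputable def majP (n : ℕ) (q : ℝ) : ℝ :=
  ∑ j ∈ Finset.Icc (n+1) (2*n+1), ((2*n+1).choose j : ℝ) * q^j * (1-q)^(2*n+1-j)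

/-- Population voting curve. -/
noncomputable def voteV (μ : Measure ℝ) (n : ℕ) : ℝ := ∫ q, majP n q ∂μ

lemma aux_fin (μ : Measure ℝ) [IsFiniteMeasure μ] (g : ℝ → ℝ) (hg : ∀ q ∈ Set.Icc (0:ℝ) 1, g q ≤ 1) :
    IsFiniteMeasure ((μ.restrict (Set.Icc 0 1)).withDensity (fun q => ENNReal.ofReal (g q))) := by
  apply isFiniteMeasure_withDensity
  have h : ∫⁻ q, ENNReal.ofReal (g q) ∂(μ.restrict (Set.Icc 0 1)) ≤ ∫⁻ _, 1 ∂(μ.restrict (Set.Icc 0 1)) := by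
    refine setLIntegral_mono' measurableSet_Icc fun q hq => ?_
    simpa using ENNReal.ofReal_le_one.2 (hg q hq)
  refine ne_of_lt (lt_of_le_of_lt h ?_)
  simp [lintegral_one]

/-- Signed voting signature as a signed measure on ℝ (carried on [0,1/4]). -/
noncomputable def signature (μ : Measure ℝ) [IsFiniteMeasure μ] : SignedMeasure ℝ :=
  letI h1 := aux_fin μ (fun q => 2*q-1) (by intro q hq; simp only [Set.mem_Icc] at hq; linarith [hq.2])
  letI h2 := aux_fin μ (fun q => 1-2*q) (by intro q hq; simp only [Set.mem_Icc] at hq; linarith [hq.1])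
  (((μ.restrict (Set.Icc 0 1)).withDensity (fun q => ENNReal.ofReal (2*q-1))).map
      (fun q => q*(1-q))).toSignedMeasure
  - (((μ.restrict (Set.Icc 0 1)).withDensity (fun q => ENNReal.ofReal (1-2*q))).map
      (fun q => q*(1-q))).toSignedMeasure

/-- Integral of a real function against a signed measure, via the Jordan decomposition. -/
noncomputable def sInt {α : Type*} [MeasurableSpace α] (s : SignedMeasure α) (f : α → ℝ) : ℝ :=
  (∫ a, f a ∂s.toJordanDecomposition.posPart) - ∫ a, f a ∂s.toJordanDecomposition.negPart

/-- Limiting majority accuracy. -/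
noncomputable def voteVinf (μ : Measure ℝ) : ℝ :=
  (μ (Set.Ioc (1/2 : ℝ) 1)).toReal + (1/2) * (μ {(1/2 : ℝ)}).toReal

/-- Total-variation norm of the signed voting signature. -/
noncomputable def sigTV (μ : Measure ℝ) [IsFiniteMeasure μ] : ℝ :=
  ((signature μ).totalVariation Set.univ).toReal

open Real Set Finset

lemma majP_nonneg {n : ℕ} {q : ℝ} (h0 : 0 ≤ q) (h1 : q ≤ 1) : 0 ≤ majP n q := by
  unfold majP
  refine Finset.sum_nonneg fun j hj => ?_
  have : 0 ≤ 1 - q := by linarith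
  positivity

lemma full_sum (n : ℕ) (q : ℝ) :
    ∑ j ∈ Finset.range (2*n+1+1), ((2*n+1).choose j : ℝ) * q^j * (1-q)^(2*n+1-j) = 1 := by
  have h := add_pow q (1-q) (2*n+1)
  simp only [add_sub_cancel, one_pow] at h
  exact (Finset.sum_congr rfl fun j hj => by ring).trans h.symm

lemma majP_le_one {n : ℕ} {q : ℝ} (h0 : 0 ≤ q) (h1 : q ≤ 1) : majP n q ≤ 1 := by
  have h1q : 0 ≤ 1 - q := by linarith
  rw [← full_sum n q]
  unfold majP
  refine Finset.sum_le_sum_of_subset_of_nonneg ?_ fun j hj _ => by positivity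
  intro j hj
  simp only [Finset.mem_Icc, Finset.mem_range] at hj ⊢
  omega

lemma majP_symm (n : ℕ) (q : ℝ) : majP n q + majP n (1-q) = 1 := by
  have key : majP n (1-q) = ∑ j ∈ Finset.range (n+1), ((2*n+1).choose j : ℝ) * q^j * (1-q)^(2*n+1-j) := by
    unfold majP
    rw [show (1:ℝ) - (1-q) = q by ring]
    refine Finset.sum_nbij' (fun j => 2*n+1-j) (fun j => 2*n+1-j) ?_ ?_ ?_ ?_ ?_
    · intro j hj; simp only [Finset.mem_Icc] at hj; simp only [Finset.mem_range]; omega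
    · intro j hj; simp only [Finset.mem_range] at hj; simp only [Finset.mem_Icc]; omega
    · intro j hj; simp only [Finset.mem_Icc] at hj; omega
    · intro j hj; simp only [Finset.mem_range] at hj; omega
    · intro j hj
      simp only [Finset.mem_Icc] at hj
      rw [Nat.choose_symm (by omega), show 2*n+1-(2*n+1-j) = j by omega]
      ring
  have h2 : ∑ j ∈ Finset.range (n+1), ((2*n+1).choose j : ℝ) * q^j * (1-q)^(2*n+1-j) + majP n q
      = ∑ j ∈ Finset.range (2*n+1+1), ((2*n+1).choose j : ℝ) * q^j * (1-q)^(2*n+1-j) := by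
    unfold majP
    rw [Finset.range_eq_Ico, Finset.range_eq_Ico, ← Finset.Ico_add_one_right_eq_Icc (n+1) (2*n+1)]
    exact Finset.sum_Ico_consecutive _ (by omega) (by omega)
  have h3 := h2.trans (full_sum n q)
  rw [key]; linarith

lemma hoeff_scalar {p : ℝ} (hp0 : 0 ≤ p) (hp1 : p ≤ 1) {y : ℝ} (hy : 0 ≤ y) :
    1 - p + p * Real.exp y ≤ Real.exp (p * y + y^2/8) := by
  have hu : ∀ t : ℝ, 0 ≤ t → 1 ≤ 1 - p + p * Real.exp t := by
    intro t ht; nlinarith [Real.one_le_exp ht]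
  have hupos : ∀ t : ℝ, 0 ≤ t → 0 < 1 - p + p * Real.exp t :=
    fun t ht => lt_of_lt_of_le one_pos (hu t ht)
  -- derivative of u
  have hdu : ∀ t : ℝ, HasDerivAt (fun s => 1 - p + p * Real.exp s) (p * Real.exp t) t :=
    fun t => ((Real.hasDerivAt_exp t).const_mul p).const_add (1 - p)
  -- ψ = derivative of φ
  set ψ : ℝ → ℝ := fun s => p + s/4 - p * Real.exp s / (1 - p + p * Real.exp s) with hψdef
  have hdψ : ∀ t : ℝ, 0 ≤ t → HasDerivAt ψ
      (1/4 - p * Real.exp t * (1-p) / (1 - p + p * Real.exp t)^2) t := by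
    intro t ht
    have hq : HasDerivAt (fun s => p * Real.exp s / (1 - p + p * Real.exp s))
        ((p * Real.exp t * (1 - p + p * Real.exp t) - p * Real.exp t * (p * Real.exp t)) /
          (1 - p + p * Real.exp t)^2) t :=
      ((Real.hasDerivAt_exp t).const_mul p).div (hdu t) (hupos t ht).ne'
    have hlin : HasDerivAt (fun s : ℝ => p + s/4) (1/4) t := by
      simpa using ((hasDerivAt_id t).div_const 4).const_add p
    have := hlin.sub hq
    refine this.congr_deriv ?_
    have h2 : (1 - p + p * Real.exp t)^2 ≠ 0 := pow_ne_zero _ (hupos t ht).ne'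
    ring
  have hψ0 : ψ 0 = 0 := by
    simp [hψdef]
  have hψnonneg : ∀ t : ℝ, 0 ≤ t → 0 ≤ ψ t := by
    intro t ht
    have hmono : MonotoneOn ψ (Ici (0:ℝ)) := by
      refine monotoneOn_of_deriv_nonneg (convex_Ici 0) ?_ ?_ ?_
      · exact fun s hs => (hdψ s hs).continuousAt.continuousWithinAt
      · intro s hs
        rw [interior_Ici] at hs
        exact (hdψ s hs.le).differentiableAt.differentiableWithinAt
      · intro s hs
        rw [interior_Ici] at hs
        rw [(hdψ s hs.le).deriv]
        have hup := hupos s hs.le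
        rw [sub_nonneg, div_le_iff₀ (by positivity)]
        nlinarith [sq_nonneg (p * Real.exp s - (1 - p)), Real.exp_pos s]
    have := hmono (self_mem_Ici) (mem_Ici.2 ht) ht
    rwa [hψ0] at this
  -- φ
  set φ : ℝ → ℝ := fun s => p * s + s^2/8 - Real.log (1 - p + p * Real.exp s) with hφdef
  have hdφ : ∀ t : ℝ, 0 ≤ t → HasDerivAt φ (ψ t) t := by
    intro t ht
    have hlog : HasDerivAt (fun s => Real.log (1 - p + p * Real.exp s))
        (p * Real.exp t / (1 - p + p * Real.exp t)) t := (hdu t).log (hupos t ht).ne'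
    have hpoly : HasDerivAt (fun s : ℝ => p * s + s^2/8) (p + t/4) t := by
      have h1 : HasDerivAt (fun s : ℝ => p * s) p t := by
        simpa using (hasDerivAt_id t).const_mul p
      have h2 : HasDerivAt (fun s : ℝ => s^2/8) (t/4) t := by
        have := (hasDerivAt_pow 2 t).div_const 8
        refine this.congr_deriv ?_
        ring
      exact h1.add h2
    exact hpoly.sub hlog
  have hφ0 : φ 0 = 0 := by simp [hφdef]
  have hφmono : MonotoneOn φ (Ici (0:ℝ)) := by
    refine monotoneOn_of_deriv_nonneg (convex_Ici 0) ?_ ?_ ?_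
    · exact fun s hs => (hdφ s hs).continuousAt.continuousWithinAt
    · intro s hs
      rw [interior_Ici] at hs
      exact (hdφ s hs.le).differentiableAt.differentiableWithinAt
    · intro s hs
      rw [interior_Ici] at hs
      rw [(hdφ s hs.le).deriv]
      exact hψnonneg s hs.le
  have hφy : 0 ≤ φ y := by
    have := hφmono self_mem_Ici (mem_Ici.2 hy) hy
    rwa [hφ0] at this
  have hlog : Real.log (1 - p + p * Real.exp y) ≤ p * y + y^2/8 := by
    simp only [hφdef] at hφy; linarith
  calc 1 - p + p * Real.exp y = Real.exp (Real.log (1 - p + p * Real.exp y)) :=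
        (Real.exp_log (hupos y hy)).symm
    _ ≤ Real.exp (p * y + y^2/8) := Real.exp_le_exp.2 hlog

lemma add_pow_sum (x y : ℝ) (m : ℕ) :
    ∑ j ∈ Finset.range (m+1), (m.choose j : ℝ) * x^j * y^(m-j) = (x+y)^m := by
  rw [add_pow]
  exact Finset.sum_congr rfl fun j _ => by ring

lemma chernoff {n : ℕ} {q : ℝ} (h0 : 0 ≤ q) (hq : q < 1/2) :
    majP n q ≤ Real.exp (-2 * (2*(n:ℝ)+1) * (q - 1/2)^2) := by
  set M : ℝ := 2*(n:ℝ)+1 with hM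
  have hMpos : 0 < M := by positivity
  set d : ℝ := ((n:ℝ)+1) - M * q with hd
  have hdpos : 0 < d := by
    have h1 : M * q < M * (1/2) := mul_lt_mul_of_pos_left hq hMpos
    rw [hd, hM]; rw [hM] at h1; nlinarith
  set lam : ℝ := 4 * d / M with hlam
  have hlampos : 0 < lam := by positivity
  have h1q : 0 ≤ 1 - q := by linarith
  have hq1 : q ≤ 1 := by linarith
  -- Step 1: Chernoff tilting
  have step1 : majP n q ≤ Real.exp (-(lam * ((n:ℝ)+1))) * (q * Real.exp lam + (1 - q))^(2*n+1) := by
    rw [← add_pow_sum, Finset.mul_sum]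
    unfold majP
    refine le_trans (Finset.sum_le_sum ?_)
      (Finset.sum_le_sum_of_subset_of_nonneg
        (fun j hj => by simp only [Finset.mem_Icc, Finset.mem_range] at hj ⊢; omega)
        (fun j _ _ => by positivity))
    intro j hj
    simp only [Finset.mem_Icc] at hj
    have hjn : ((n:ℝ)+1) ≤ (j:ℝ) := by exact_mod_cast hj.1
    have hfac : (1:ℝ) ≤ Real.exp (-(lam * ((n:ℝ)+1)) + (j:ℝ) * lam) :=
      Real.one_le_exp (by nlinarith)
    have hLHS : 0 ≤ ((2*n+1).choose j : ℝ) * q^j * (1-q)^(2*n+1-j) := by positivity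
    calc ((2*n+1).choose j : ℝ) * q^j * (1-q)^(2*n+1-j)
        ≤ (((2*n+1).choose j : ℝ) * q^j * (1-q)^(2*n+1-j)) *
            Real.exp (-(lam * ((n:ℝ)+1)) + (j:ℝ) * lam) := le_mul_of_one_le_right hLHS hfac
      _ = Real.exp (-(lam * ((n:ℝ)+1))) *
            (((2*n+1).choose j : ℝ) * (q * Real.exp lam)^j * (1-q)^(2*n+1-j)) := by
          rw [Real.exp_add, mul_pow, ← Real.exp_nat_mul]
          ring
  -- Step 2: Hoeffding pointwise bound on the base
  have step2 : q * Real.exp lam + (1 - q) ≤ Real.exp (q * lam + lam^2/8) := by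
    have := hoeff_scalar h0 hq1 hlampos.le
    linarith
  have step3 : (q * Real.exp lam + (1 - q))^(2*n+1) ≤ Real.exp (M * (q * lam + lam^2/8)) := by
    have hb0 : 0 ≤ q * Real.exp lam + (1 - q) := by positivity
    calc (q * Real.exp lam + (1 - q))^(2*n+1)
        ≤ (Real.exp (q * lam + lam^2/8))^(2*n+1) := pow_le_pow_left₀ hb0 step2 _
      _ = Real.exp (M * (q * lam + lam^2/8)) := by
          rw [← Real.exp_nat_mul, hM]; push_cast; ring_nf
  have hcomb : majP n q ≤ Real.exp (-(lam * ((n:ℝ)+1)) + M * (q * lam + lam^2/8)) := by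
    rw [Real.exp_add]
    exact step1.trans (mul_le_mul_of_nonneg_left step3 (Real.exp_pos _).le)
  refine hcomb.trans (Real.exp_le_exp.2 ?_)
  have hexp : -(lam * ((n:ℝ)+1)) + M * (q * lam + lam^2/8) = -2 * d^2 / M := by
    rw [hlam]; field_simp; rw [hd]; ring
  rw [hexp]
  have hc : M * (1/2 - q) ≤ d := by rw [hd, hM]; nlinarith
  have hcpos : 0 < M * (1/2 - q) := by nlinarith
  rw [div_le_iff₀ hMpos]
  nlinarith [sq_nonneg (q - 1/2)]

lemma pointwise_bound {n : ℕ} {q : ℝ} (h0 : 0 ≤ q) (h1 : q ≤ 1) :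
    |majP n q - Set.indicator (Set.Ioi (1/2:ℝ)) (fun _ => 1) q|
      ≤ Real.exp (-2 * (2*(n:ℝ)+1) * (q - 1/2)^2) := by
  rcases lt_trichotomy q (1/2) with h|h|h
  · rw [Set.indicator_of_notMem (by simp only [Set.mem_Ioi, not_lt]; linarith), sub_zero,
      abs_of_nonneg (majP_nonneg h0 h1)]
    exact chernoff h0 h
  · rw [Set.indicator_of_notMem (by simp only [Set.mem_Ioi, not_lt]; linarith), sub_zero,
      abs_of_nonneg (majP_nonneg h0 h1)]
    rw [show q - 1/2 = 0 by linarith]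
    simpa using majP_le_one h0 h1
  · rw [Set.indicator_of_mem (Set.mem_Ioi.2 h),
      abs_of_nonpos (by simp only [sub_nonpos]; exact majP_le_one h0 h1), neg_sub]
    have hsym := majP_symm n q
    have h0' : 0 ≤ 1 - q := by linarith
    have h' : 1 - q < 1/2 := by linarith
    have := chernoff (n := n) h0' h'
    rw [show ((1:ℝ)-q-1/2)^2 = (q-1/2)^2 by ring] at this
    linarith

lemma ftc_bit {M : ℝ} {x t₀ : ℝ} (hx : 0 ≤ x) (hxt : x ≤ t₀) :
    ∫ s in x..t₀, 4*M*s*Real.exp (-2*M*s^2)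
      = Real.exp (-2*M*x^2) - Real.exp (-2*M*t₀^2) := by
  have hderiv : ∀ s ∈ Set.uIcc x t₀, HasDerivAt (fun u => -Real.exp (-2*M*u^2))
      (4*M*s*Real.exp (-2*M*s^2)) s := by
    intro s _
    have h1 : HasDerivAt (fun u : ℝ => -2*M*u^2) (-2*M*(2*s)) s := by
      simpa using (hasDerivAt_pow 2 s).const_mul (-2*M)
    have h2 := (h1.exp).neg
    refine h2.congr_deriv ?_
    ring
  have hcont : Continuous fun s : ℝ => 4*M*s*Real.exp (-2*M*s^2) := by fun_prop
  have := intervalIntegral.integral_eq_sub_of_hasDerivAt hderiv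
    (hcont.intervalIntegrable x t₀)
  rw [this]; ring

lemma gauss_moment {M : ℝ} (hM : 0 < M) {κ : ℝ} (hκ : 0 < κ) :
    ∫ s in Set.Ioi (0:ℝ), s ^ (κ+1) * Real.exp (-2*M*s^2)
      = (1/(2*M)) ^ (κ/2+1) * Real.Gamma (κ/2+1) / 2 := by
  have h2M : 0 < 2*M := by linarith
  have h1 := MeasureTheory.integral_comp_rpow_Ioi_of_pos
    (g := fun y => y ^ (κ/2+1-1) * Real.exp (-(2*M*y))) (p := 2) two_pos
  have h2 : ∫ y in Set.Ioi (0:ℝ), y ^ (κ/2+1-1) * Real.exp (-(2*M*y))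
      = (1/(2*M)) ^ (κ/2+1) * Real.Gamma (κ/2+1) :=
    Real.integral_rpow_mul_exp_neg_mul_Ioi (by linarith) h2M
  rw [h2] at h1
  have h3 : ∀ x ∈ Set.Ioi (0:ℝ),
      (2 * x ^ ((2:ℝ)-1)) • ((x ^ (2:ℝ)) ^ (κ/2+1-1) * Real.exp (-(2*M*(x ^ (2:ℝ)))))
        = 2 * (x ^ (κ+1) * Real.exp (-2*M*x^2)) := by
    intro x hx
    have hx0 : 0 < x := hx
    have hx2 : x ^ (2:ℝ) = x^2 := by
      rw [show (2:ℝ) = ((2:ℕ):ℝ) by norm_num, Real.rpow_natCast]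
    have hxk : (x ^ (2:ℝ)) ^ (κ/2+1-1) = x ^ κ := by
      rw [show κ/2+1-1 = κ/2 by ring, ← Real.rpow_mul hx0.le,
        show (2:ℝ) * (κ/2) = κ by ring]
    have hx1 : x ^ ((2:ℝ)-1) = x := by
      rw [show (2:ℝ)-1 = 1 by norm_num, Real.rpow_one]
    have hxk1 : x ^ (κ+1) = x ^ κ * x := by
      rw [Real.rpow_add hx0, Real.rpow_one]
    rw [hx1, hxk, smul_eq_mul, hxk1, hx2]
    ring_nf
  rw [MeasureTheory.setIntegral_congr_fun measurableSet_Ioi h3] at h1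
  rw [MeasureTheory.integral_const_mul] at h1
  linarith

lemma gauss_moment' {M C κ : ℝ} (hM : 0 < M) (hC : 0 < C) (hκ : 0 < κ) :
    ∫ s in Set.Ioi (0:ℝ), 4*M*s*Real.exp (-2*M*s^2) * (C * s^κ)
      = C * Real.Gamma (1+κ/2) * (2*M) ^ (-(κ/2)) := by
  have h2M : 0 < 2*M := by linarith
  have hcongr : ∀ s ∈ Set.Ioi (0:ℝ),
      4*M*s*Real.exp (-2*M*s^2) * (C * s^κ)
        = (4*M*C) * (s ^ (κ+1) * Real.exp (-2*M*s^2)) := by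
    intro s hs
    have hs0 : 0 < s := hs
    rw [Real.rpow_add hs0, Real.rpow_one]
    ring
  rw [MeasureTheory.setIntegral_congr_fun measurableSet_Ioi hcongr,
    MeasureTheory.integral_const_mul, gauss_moment hM hκ]
  have hrp : 0 < (2*M) ^ (κ/2) := Real.rpow_pos_of_pos h2M _
  have e1 : ((1:ℝ)/(2*M)) ^ (κ/2+1) = ((2*M) ^ (κ/2+1))⁻¹ := by
    rw [one_div, Real.inv_rpow h2M.le]
  have e2 : (2*M) ^ (κ/2+1) = (2*M)^(κ/2) * (2*M) := by
    rw [Real.rpow_add h2M, Real.rpow_one]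
  have e3 : (2*M) ^ (-(κ/2)) = ((2*M)^(κ/2))⁻¹ := Real.rpow_neg h2M.le _
  rw [e1, e2, e3, show (1:ℝ)+κ/2 = κ/2+1 by ring]
  field_simp
  ring

set_option maxHeartbeats 2000000 in
/-- Threshold-margin bridge: a local margin condition near `q = 1/2` gives the endpoint
rate `exp(−2M t₀²) + C Γ(1+κ/2) (2M)^{−κ/2}` with `M = 2n+1`. -/
theorem stmt11 (μ : Measure ℝ) [IsProbabilityMeasure μ] (hμ : μ (Set.Icc (0:ℝ) 1)ᶜ = 0)
    (C κ t₀ : ℝ) (hC : 0 < C) (hκ : 0 < κ) (ht₀ : t₀ ∈ Set.Ioc (0:ℝ) (1/2))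
    (hmargin : ∀ t : ℝ, 0 < t → t < t₀ →
      (μ {q : ℝ | |q - 1/2| ≤ t}).toReal ≤ C * t ^ κ) :
    ∀ n : ℕ, |voteV μ n - voteVinf μ| ≤
      Real.exp (-2 * (2*n+1) * t₀^2) +
        C * Real.Gamma (1 + κ/2) * (2*(2*n+1) : ℝ) ^ (-(κ/2)) := by
  intro n
  obtain ⟨ht₀pos, ht₀le⟩ := ht₀
  set M : ℝ := 2*(n:ℝ)+1 with hM
  have hMpos : 0 < M := by positivity
  have h2M : 0 < 2*M := by linarith
  set e₀ : ℝ := Real.exp (-2*M*t₀^2) with he₀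
  set R : ℝ := C * Real.Gamma (1 + κ/2) * (2*M) ^ (-(κ/2)) with hR
  have he₀pos : 0 < e₀ := Real.exp_pos _
  have hΓpos : 0 < Real.Gamma (1 + κ/2) := Real.Gamma_pos_of_pos (by linarith)
  have hRpos : 0 < R := by
    have := Real.rpow_pos_of_pos h2M (-(κ/2))
    positivity
  -- μ({1/2}) = 0
  have hhalf : μ {(1/2:ℝ)} = 0 := by
    have hle : ∀ t : ℝ, 0 < t → t < t₀ → (μ {(1/2:ℝ)}).toReal ≤ C * t^κ := by
      intro t h1 h2
      refine le_trans (ENNReal.toReal_mono (measure_ne_top _ _)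
        (measure_mono ?_)) (hmargin t h1 h2)
      intro x hx
      simp only [Set.mem_singleton_iff] at hx
      subst hx
      simp only [Set.mem_setOf_eq, sub_self, abs_zero]
      exact h1.le
    have htend : Filter.Tendsto (fun t : ℝ => C * t^κ) (nhdsWithin 0 (Set.Ioi 0)) (nhds 0) := by
      have h1 : ContinuousAt (fun t : ℝ => t^κ) 0 :=
        Real.continuousAt_rpow_const 0 κ (Or.inr hκ.le)
      have h2 := (h1.tendsto.const_mul C).mono_left (nhdsWithin_le_nhds (s := Set.Ioi (0:ℝ)))
      rw [Real.zero_rpow hκ.ne', mul_zero] at h2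
      exact h2
    have hev : ∀ᶠ t in nhdsWithin 0 (Set.Ioi 0), (μ {(1/2:ℝ)}).toReal ≤ C * t^κ := by
      filter_upwards [Ioo_mem_nhdsGT_of_mem ⟨le_refl (0:ℝ), ht₀pos⟩] with t ht
      exact hle t ht.1 ht.2
    have hfin := ge_of_tendsto htend hev
    have h0 : (μ {(1/2:ℝ)}).toReal = 0 := le_antisymm hfin ENNReal.toReal_nonneg
    exact (ENNReal.toReal_eq_zero_iff _).1 h0 |>.resolve_right (measure_ne_top _ _)
  -- μ(Ioi 1/2) = μ(Ioc 1/2 1)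
  have hioi : μ (Set.Ioi (1/2:ℝ)) = μ (Set.Ioc (1/2:ℝ) 1) := by
    refine le_antisymm ?_ (measure_mono Set.Ioc_subset_Ioi_self)
    have hsplit : Set.Ioi (1/2:ℝ) = Set.Ioc (1/2:ℝ) 1 ∪ Set.Ioi 1 :=
      (Set.Ioc_union_Ioi_eq_Ioi (by norm_num)).symm
    have hnull : μ (Set.Ioi (1:ℝ)) = 0 := by
      refine measure_mono_null ?_ hμ
      intro x hx
      simp only [Set.mem_Ioi] at hx
      simp only [Set.mem_compl_iff, Set.mem_Icc, not_and, not_le]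
      intro _; exact hx
    calc μ (Set.Ioi (1/2:ℝ)) ≤ μ (Set.Ioc (1/2:ℝ) 1) + μ (Set.Ioi 1) := by
          rw [hsplit]; exact measure_union_le _ _
      _ = μ (Set.Ioc (1/2:ℝ) 1) := by rw [hnull, add_zero]
  have hVinf : voteVinf μ = (μ (Set.Ioi (1/2:ℝ))).toReal := by
    unfold voteVinf
    rw [hhalf, hioi]
    simp
  have haeIcc : ∀ᵐ q ∂μ, q ∈ Set.Icc (0:ℝ) 1 := by
    rw [MeasureTheory.ae_iff]
    simpa [Set.compl_def] using hμ
  -- integrability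
  have hcont_majP : Continuous (majP n) := by
    unfold majP
    exact continuous_finset_sum _ fun j _ => by fun_prop
  have int_majP : Integrable (majP n) μ := by
    refine MeasureTheory.Integrable.mono' (integrable_const 1)
      hcont_majP.aestronglyMeasurable ?_
    filter_upwards [haeIcc] with q hq
    rw [Real.norm_eq_abs, abs_of_nonneg (majP_nonneg hq.1 hq.2)]
    exact majP_le_one hq.1 hq.2
  have int_ind : Integrable (Set.indicator (Set.Ioi (1/2:ℝ)) (fun _ => (1:ℝ))) μ :=
    (integrable_const (1:ℝ)).indicator measurableSet_Ioi
  set f : ℝ → ℝ := fun q => majP n q - Set.indicator (Set.Ioi (1/2:ℝ)) (fun _ => (1:ℝ)) q with hf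
  have hsub : voteV μ n - voteVinf μ = ∫ q, f q ∂μ := by
    rw [MeasureTheory.integral_sub int_majP int_ind, hVinf]
    unfold voteV
    congr 1
    rw [MeasureTheory.integral_indicator_const (1:ℝ) measurableSet_Ioi]
    simp
    rfl
  -- the bound function machinery
  set g : ℝ → ℝ := fun s => 4*M*s*Real.exp (-2*M*s^2) with hg
  have hcontg : Continuous g := by rw [hg]; fun_prop
  set S : Set ℝ := {q : ℝ | t₀ ≤ |q - 1/2|} with hSdef
  have hSmeas : MeasurableSet S := (isClosed_le continuous_const (by fun_prop)).measurableSet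
  set F : ℝ → ℝ → ENNReal := fun q s =>
    (Set.Ioi |q - 1/2|).indicator (fun u => ENNReal.ofReal (g u)) s with hF
  set Φ : ℝ → ENNReal := fun q => ∫⁻ s in Set.Ioo 0 t₀, F q s with hΦ
  -- pointwise decomposition on the near set
  have hnear_pt : ∀ q ∈ Sᶜ, ENNReal.ofReal (Real.exp (-2*M*(q-1/2)^2))
      = ENNReal.ofReal e₀ + Φ q := by
    intro q hq
    have hxt : |q - 1/2| < t₀ := by
      simp only [hSdef, Set.mem_compl_iff, Set.mem_setOf_eq, not_le] at hq
      exact hq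
    set x : ℝ := |q - 1/2| with hx
    have hx0 : 0 ≤ x := abs_nonneg _
    have hx2 : x^2 = (q-1/2)^2 := sq_abs _
    have hIoo : ∫ s in Set.Ioo x t₀, g s = Real.exp (-2*M*x^2) - e₀ := by
      rw [← MeasureTheory.integral_Ioc_eq_integral_Ioo,
        ← intervalIntegral.integral_of_le hxt.le]
      exact ftc_bit hx0 hxt.le
    have hmono_exp : e₀ ≤ Real.exp (-2*M*x^2) := by
      rw [he₀]
      apply Real.exp_le_exp.2
      have h1 : x^2 ≤ t₀^2 := by nlinarith
      nlinarith [mul_nonneg hMpos.le (sub_nonneg.2 h1)]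
    have hseteq : Set.Ioi x ∩ Set.Ioo 0 t₀ = Set.Ioo x t₀ := by
      ext s
      simp only [Set.mem_inter_iff, Set.mem_Ioi, Set.mem_Ioo]
      constructor
      · rintro ⟨h1, _, h3⟩; exact ⟨h1, h3⟩
      · rintro ⟨h1, h2⟩; exact ⟨h1, lt_of_le_of_lt hx0 h1, h2⟩
    have hΦeq : Φ q = ∫⁻ s in Set.Ioo x t₀, ENNReal.ofReal (g s) :=
      calc Φ q = ∫⁻ s in Set.Ioo 0 t₀,
            (Set.Ioi x).indicator (fun u => ENNReal.ofReal (g u)) s := rfl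
        _ = ∫⁻ s in Set.Ioi x ∩ Set.Ioo 0 t₀, ENNReal.ofReal (g s) := by
            rw [lintegral_indicator measurableSet_Ioi,
              Measure.restrict_restrict measurableSet_Ioi]
        _ = ∫⁻ s in Set.Ioo x t₀, ENNReal.ofReal (g s) := by rw [hseteq]
    have hint : MeasureTheory.IntegrableOn g (Set.Ioo x t₀) :=
      (hcontg.integrableOn_Icc).mono_set Set.Ioo_subset_Icc_self
    have hnn : 0 ≤ᵐ[volume.restrict (Set.Ioo x t₀)] g := by
      filter_upwards [self_mem_ae_restrict measurableSet_Ioo] with s hs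
      have hs0 : 0 < s := lt_of_le_of_lt hx0 hs.1
      rw [hg]
      positivity
    have hofReal : ENNReal.ofReal (Real.exp (-2*M*x^2) - e₀)
        = ∫⁻ s in Set.Ioo x t₀, ENNReal.ofReal (g s) := by
      rw [← hIoo]
      exact MeasureTheory.ofReal_integral_eq_lintegral_ofReal hint hnn
    rw [hΦeq, ← hofReal, ← ENNReal.ofReal_add he₀pos.le (by linarith), ← hx2]
    congr 1
    ring
  -- the key lintegral bound
  have hB : ∫⁻ q, ENNReal.ofReal ‖f q‖ ∂μ
      ≤ ∫⁻ q, ENNReal.ofReal (Real.exp (-2*M*(q-1/2)^2)) ∂μ := by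
    refine MeasureTheory.lintegral_mono_ae ?_
    filter_upwards [haeIcc] with q hq
    refine ENNReal.ofReal_le_ofReal ?_
    rw [Real.norm_eq_abs, hf]
    exact pointwise_bound hq.1 hq.2
  have hfar : ∫⁻ q in S, ENNReal.ofReal (Real.exp (-2*M*(q-1/2)^2)) ∂μ
      ≤ ENNReal.ofReal e₀ * μ S := by
    rw [← MeasureTheory.setLIntegral_const S (ENNReal.ofReal e₀)]
    refine MeasureTheory.setLIntegral_mono measurable_const ?_
    intro q hq
    have hq' : t₀ ≤ |q - 1/2| := hq
    refine ENNReal.ofReal_le_ofReal (Real.exp_le_exp.2 ?_)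
    have h1 : t₀^2 ≤ (q - 1/2)^2 := by
      nlinarith [sq_abs (q - 1/2), abs_nonneg (q - 1/2)]
    nlinarith [mul_nonneg hMpos.le (sub_nonneg.2 h1)]
  -- near: congr + split the constant
  have hΦmeas : Measurable (Function.uncurry F) := by
    have heq : Function.uncurry F = fun p : ℝ × ℝ =>
        ({p : ℝ × ℝ | |p.1 - 1/2| < p.2}).indicator (fun p => ENNReal.ofReal (g p.2)) p := by
      funext p
      by_cases h : |p.1 - 1/2| < p.2 <;>
        simp [Function.uncurry, hF, Set.indicator_apply, Set.mem_Ioi, Set.mem_setOf_eq, h]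
    rw [heq]
    refine Measurable.indicator ?_ ?_
    · exact ENNReal.measurable_ofReal.comp (hcontg.measurable.comp measurable_snd)
    · exact (isOpen_lt (by fun_prop) continuous_snd).measurableSet
  have hnear : ∫⁻ q in Sᶜ, ENNReal.ofReal (Real.exp (-2*M*(q-1/2)^2)) ∂μ
      = ENNReal.ofReal e₀ * μ Sᶜ + ∫⁻ q in Sᶜ, Φ q ∂μ := by
    rw [MeasureTheory.setLIntegral_congr_fun hSmeas.compl
      hnear_pt]
    rw [MeasureTheory.lintegral_add_left measurable_const]
    congr 1
    rw [MeasureTheory.setLIntegral_const]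
  have hswap : ∫⁻ q in Sᶜ, Φ q ∂μ
      = ∫⁻ s in Set.Ioo 0 t₀, ∫⁻ q in Sᶜ, F q s ∂μ ∂volume := by
    exact MeasureTheory.lintegral_lintegral_swap (μ := μ.restrict Sᶜ)
      (ν := volume.restrict (Set.Ioo 0 t₀)) (f := F) hΦmeas.aemeasurable
  have hinner : ∀ s ∈ Set.Ioo (0:ℝ) t₀,
      (∫⁻ q in Sᶜ, F q s ∂μ) ≤ ENNReal.ofReal (g s * (C * s^κ)) := by
    intro s hs
    have hgnn : 0 ≤ g s := by
      rw [hg]; have := hs.1; positivity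
    have hFs : (fun q => F q s) = fun q =>
        ({q : ℝ | |q - 1/2| < s}).indicator (fun _ => ENNReal.ofReal (g s)) q := by
      funext q
      by_cases h : |q - 1/2| < s <;>
        simp [hF, Set.indicator_apply, Set.mem_Ioi, Set.mem_setOf_eq, h]
    have hAmeas : MeasurableSet {q : ℝ | |q - 1/2| < s} :=
      (isOpen_lt (by fun_prop) continuous_const).measurableSet
    rw [hFs, lintegral_indicator hAmeas, MeasureTheory.setLIntegral_const,
      ENNReal.ofReal_mul hgnn]
    refine mul_le_mul_right ?_ _
    calc (μ.restrict Sᶜ) {q : ℝ | |q - 1/2| < s}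
        ≤ μ {q : ℝ | |q - 1/2| < s} := Measure.restrict_le_self _
      _ ≤ μ {q : ℝ | |q - 1/2| ≤ s} := measure_mono fun q (hq : |q - 1/2| < s) => le_of_lt hq
      _ ≤ ENNReal.ofReal (C * s^κ) := by
          refine (ENNReal.le_ofReal_iff_toReal_le (measure_ne_top _ _) ?_).2
            (hmargin s hs.1 hs.2)
          have := Real.rpow_nonneg hs.1.le κ
          positivity
  have htail_int : MeasureTheory.IntegrableOn (fun s => g s * (C * s^κ)) (Set.Ioi (0:ℝ)) := by
    have hbase := (integrableOn_rpow_mul_exp_neg_mul_sq h2M (s := κ+1)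
      (by linarith)).const_mul (4*M*C)
    refine MeasureTheory.IntegrableOn.congr_fun hbase ?_ measurableSet_Ioi
    intro x hx
    have hx0 : (0:ℝ) < x := hx
    rw [hg]
    simp only
    rw [Real.rpow_add hx0, Real.rpow_one, show -(2*M)*x^2 = -2*M*x^2 by ring]
    ring
  have htail : ∫⁻ s in Set.Ioo (0:ℝ) t₀, ENNReal.ofReal (g s * (C * s^κ)) ∂volume
      ≤ ENNReal.ofReal R := by
    calc ∫⁻ s in Set.Ioo (0:ℝ) t₀, ENNReal.ofReal (g s * (C * s^κ)) ∂volume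
        ≤ ∫⁻ s in Set.Ioi (0:ℝ), ENNReal.ofReal (g s * (C * s^κ)) ∂volume :=
          MeasureTheory.lintegral_mono_set Set.Ioo_subset_Ioi_self
      _ = ENNReal.ofReal (∫ s in Set.Ioi (0:ℝ), g s * (C * s^κ)) := by
          refine (MeasureTheory.ofReal_integral_eq_lintegral_ofReal htail_int ?_).symm
          filter_upwards [self_mem_ae_restrict measurableSet_Ioi] with s hs
          have hs0 : (0:ℝ) < s := hs
          have h1 : (0:ℝ) ≤ s ^ κ := Real.rpow_nonneg hs0.le κ
          rw [hg]
          positivity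
      _ = ENNReal.ofReal R := by
          rw [hR, hg, ← gauss_moment' hMpos hC hκ]
  have hΦbound : ∫⁻ q in Sᶜ, Φ q ∂μ ≤ ENNReal.ofReal R := by
    rw [hswap]
    refine le_trans (MeasureTheory.setLIntegral_mono ?_ hinner) htail
    exact ENNReal.measurable_ofReal.comp
      ((hcontg.measurable).mul (measurable_const.mul (measurable_id.pow_const κ)))
  have hmain : ∫⁻ q, ENNReal.ofReal ‖f q‖ ∂μ ≤ ENNReal.ofReal e₀ + ENNReal.ofReal R := by
    calc ∫⁻ q, ENNReal.ofReal ‖f q‖ ∂μ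
        ≤ ∫⁻ q, ENNReal.ofReal (Real.exp (-2*M*(q-1/2)^2)) ∂μ := hB
      _ = (∫⁻ q in S, ENNReal.ofReal (Real.exp (-2*M*(q-1/2)^2)) ∂μ)
          + ∫⁻ q in Sᶜ, ENNReal.ofReal (Real.exp (-2*M*(q-1/2)^2)) ∂μ :=
          (MeasureTheory.lintegral_add_compl _ hSmeas).symm
      _ ≤ ENNReal.ofReal e₀ * μ S + (ENNReal.ofReal e₀ * μ Sᶜ + ENNReal.ofReal R) := by
          refine add_le_add hfar ?_
          rw [hnear]
          exact add_le_add_right hΦbound _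
      _ = ENNReal.ofReal e₀ * (μ S + μ Sᶜ) + ENNReal.ofReal R := by ring
      _ = ENNReal.ofReal e₀ + ENNReal.ofReal R := by
          rw [measure_add_measure_compl hSmeas, measure_univ, mul_one]
  have habs : |voteV μ n - voteVinf μ| ≤ (∫⁻ q, ENNReal.ofReal ‖f q‖ ∂μ).toReal := by
    rw [hsub, ← Real.norm_eq_abs]
    exact MeasureTheory.norm_integral_le_lintegral_norm _
  refine habs.trans ?_
  calc (∫⁻ q, ENNReal.ofReal ‖f q‖ ∂μ).toReal
      ≤ (ENNReal.ofReal e₀ + ENNReal.ofReal R).toReal :=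
        ENNReal.toReal_mono (by finiteness) hmain
    _ = e₀ + R := by
        rw [ENNReal.toReal_add ENNReal.ofReal_ne_top ENNReal.ofReal_ne_top,
          ENNReal.toReal_ofReal he₀pos.le, ENNReal.toReal_ofReal hRpos.le]
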